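/- Let A be a module over the algebra W (equivalently, a ℂ-vector space together with a ℂ-algebra homomorphism W → End_ℂ A), and let A₀ ⊆ A be a ℂ-subspace stable under the action of every operator E_{ij} (1 ≤ i,j ≤ n) and every operator E'_{ab} (1 ≤ a,b ≤ k). Let V be a nonzero gl_n-module admitting a minimal polynomial q, and V' a nonzero gl_k-module admitting a minimal polynomial q'. Suppose there is a ℂ-linear isomorphism φ : A/A₀ → V ⊗_ℂ V' such that for all i,j,a,b and all ā ∈ A/A₀: φ(E_{ij}·ā) = (E_{ij} ⊗ 1)·φ(ā) and φ(E'_{ab}·ā) = (1 ⊗ E'_{ab})·φ(ā), where on the right-hand sides E_{ij} acts on V via the gl_n-module structure and E'_{ab} acts on V' via the gl_k-module structure. Then q(u) divides u·q'(u + k − n), and q'(u) divides u·q(u − k + n). -/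

import Mathlib

noncomputable section

attribute [local instance 100] LieRing.ofAssociativeRing

/-- The polynomial ring `P = ℂ[x_{ai} : 1 ≤ a ≤ k, 1 ≤ i ≤ n]` of polynomial functions on
`k × n` matrices. -/
abbrev Pring (n k : ℕ) := MvPolynomial (Fin k × Fin n) ℂ

/-- `X_{ai}`: multiplication by the variable `x_{ai}`. -/
def Xop (n k : ℕ) (a : Fin k) (i : Fin n) : Module.End ℂ (Pring n k) :=
  LinearMap.mulLeft ℂ (MvPolynomial.X (a, i))

/-- `D_{ai}`: the partial derivative `∂/∂x_{ai}`. -/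
def Dop (n k : ℕ) (a : Fin k) (i : Fin n) : Module.End ℂ (Pring n k) :=
  (MvPolynomial.pderiv (a, i)).toLinearMap

/-- The polarization operator `E_{ij} = Σ_a X_{ai} ∘ D_{aj}` (an entry of `XᵗD`),
realizing `gl_n` on `P`. -/
def Eop (n k : ℕ) (i j : Fin n) : Module.End ℂ (Pring n k) :=
  ∑ a : Fin k, Xop n k a i * Dop n k a j

/-- The polarization operator `E'_{ab} = Σ_i X_{ai} ∘ D_{bi}` (an entry of `XDᵗ`),
realizing `gl_k` on `P`. -/
def E'op (n k : ℕ) (a b : Fin k) : Module.End ℂ (Pring n k) :=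
  ∑ i : Fin n, Xop n k a i * Dop n k b i

/-- The `n × n` matrix `E` over `End_ℂ P` with entries `E_{ij}`. -/
def EmatW (n k : ℕ) : Matrix (Fin n) (Fin n) (Module.End ℂ (Pring n k)) :=
  fun i j => Eop n k i j

/-- The `k × k` matrix `E'` over `End_ℂ P` with entries `E'_{ab}`. -/
def E'matW (n k : ℕ) : Matrix (Fin k) (Fin k) (Module.End ℂ (Pring n k)) :=
  fun a b => E'op n k a b

/-- The Weyl algebra `W ⊆ End_ℂ P`: the subalgebra generated by all `X_{ai}` and `D_{ai}`. -/
def Weyl (n k : ℕ) : Subalgebra ℂ (Module.End ℂ (Pring n k)) :=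
  Algebra.adjoin ℂ
    ((Set.range fun p : Fin k × Fin n => Xop n k p.1 p.2) ∪
     (Set.range fun p : Fin k × Fin n => Dop n k p.1 p.2))

lemma Eop_mem (n k : ℕ) (i j : Fin n) : Eop n k i j ∈ Weyl n k := by
  refine Subalgebra.sum_mem _ fun a _ => ?_
  exact mul_mem (Algebra.subset_adjoin (Or.inl ⟨(a, i), rfl⟩))
    (Algebra.subset_adjoin (Or.inr ⟨(a, j), rfl⟩))

lemma E'op_mem (n k : ℕ) (a b : Fin k) : E'op n k a b ∈ Weyl n k := by
  refine Subalgebra.sum_mem _ fun i _ => ?_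
  exact mul_mem (Algebra.subset_adjoin (Or.inl ⟨(a, i), rfl⟩))
    (Algebra.subset_adjoin (Or.inr ⟨(b, i), rfl⟩))

/-- `gl_m`: the Lie algebra of `m × m` complex matrices with the commutator bracket. -/
abbrev glN (m : ℕ) := Matrix (Fin m) (Fin m) ℂ

/-- The matrix over `End_ℂ V` whose `(i,j)` entry is the action of the matrix unit
`E_{ij}` on the `gl_m`-module `V`. -/
def FV (m : ℕ) {V : Type} [AddCommGroup V] [Module ℂ V]
    (ρ : glN m →ₗ⁅ℂ⁆ Module.End ℂ V) : Matrix (Fin m) (Fin m) (Module.End ℂ V) :=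
  fun i j => ρ (Matrix.single i j 1)

/-- `q` is the minimal polynomial of the matrix `M`: the monic polynomial of least degree
annihilating `M`. -/
def IsMinPoly {W : Type} [AddCommGroup W] [Module ℂ W] {ι : Type} [Fintype ι] [DecidableEq ι]
    (M : Matrix ι ι (Module.End ℂ W)) (q : Polynomial ℂ) : Prop :=
  q.Monic ∧ Polynomial.aeval M q = 0 ∧
    ∀ p : Polynomial ℂ, p.Monic → Polynomial.aeval M p = 0 → q.degree ≤ p.degree


open Polynomial Finset



/-- Abstract CCR family: `X`/`D` operators indexed by `ι' × ι` in a ℂ-algebra `R`. -/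
structure CCR (R : Type*) [Ring R] [Algebra ℂ R] (ι ι' : Type*)
    [Fintype ι] [Fintype ι'] [DecidableEq ι] [DecidableEq ι'] where
  Xg : ι' → ι → R
  Dg : ι' → ι → R
  hXX : ∀ a i b j, Xg a i * Xg b j = Xg b j * Xg a i
  hDD : ∀ a i b j, Dg a i * Dg b j = Dg b j * Dg a i
  hDX : ∀ a i b j, Dg a i * Xg b j = Xg b j * Dg a i + (if a = b ∧ i = j then 1 else 0)

namespace CCR

variable {R : Type*} [Ring R] [Algebra ℂ R] {ι ι' : Type*}
  [Fintype ι] [Fintype ι'] [DecidableEq ι] [DecidableEq ι'] (c : CCR R ι ι')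

/-- The `gl(ι)`-type polarization matrix `E`. -/
def eM : Matrix ι ι R := Matrix.of fun i j => ∑ a, c.Xg a i * c.Dg a j

/-- The `gl(ι')`-type polarization matrix `E'`. -/
def fM : Matrix ι' ι' R := Matrix.of fun a b => ∑ i, c.Xg a i * c.Dg b i

lemma XD_swap (a b : ι') (i j : ι) :
    c.Xg a i * c.Dg b j = c.Dg b j * c.Xg a i - (if b = a ∧ j = i then 1 else 0) := by
  rw [c.hDX b j a i]; abel

lemma fM_mul_X (a b e : ι') (i : ι) :
    c.fM a b * c.Xg e i = c.Xg e i * c.fM a b + (if b = e then c.Xg a i else 0) := by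
  have key : c.fM a b * c.Xg e i
      = ∑ l, (c.Xg e i * (c.Xg a l * c.Dg b l) + (if b = e ∧ l = i then c.Xg a l else 0)) := by
    rw [fM, Matrix.of_apply, Finset.sum_mul]
    refine Finset.sum_congr rfl fun l _ => ?_
    rw [mul_assoc, c.hDX b l e i, mul_add, ← mul_assoc, c.hXX a l e i, mul_assoc, mul_ite,
      mul_one, mul_zero]
  have hcol : (∑ l, if b = e ∧ l = i then c.Xg a l else 0) = (if b = e then c.Xg a i else 0) := by
    by_cases h : b = e <;> simp [h]
  rw [key, Finset.sum_add_distrib, ← Finset.mul_sum, hcol]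
  rfl

lemma fM_mul_D (a b e : ι') (j : ι) :
    c.fM a b * c.Dg e j = c.Dg e j * c.fM a b - (if a = e then c.Dg b j else 0) := by
  have key : c.fM a b * c.Dg e j
      = ∑ l, (c.Dg e j * (c.Xg a l * c.Dg b l) - (if e = a ∧ j = l then c.Dg b l else 0)) := by
    rw [fM, Matrix.of_apply, Finset.sum_mul]
    refine Finset.sum_congr rfl fun l _ => ?_
    rw [mul_assoc, c.hDD b l e j, ← mul_assoc, c.XD_swap a e l j, sub_mul, mul_assoc, ite_mul,
      one_mul, zero_mul]
  have hcol : (∑ l, if e = a ∧ j = l then c.Dg b l else 0) = (if a = e then c.Dg b j else 0) := by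
    by_cases h : a = e
    · simp [h]
    · have h' : ¬ e = a := fun hh => h hh.symm
      simp [h, h']
  rw [key, Finset.sum_sub_distrib, ← Finset.mul_sum, hcol]
  rfl

lemma eM_mul_fM (i j : ι) (a b : ι') :
    c.eM i j * c.fM a b = c.fM a b * c.eM i j := by
  have step : ∀ u, (c.Xg u i * c.Dg u j) * c.fM a b
      = c.fM a b * (c.Xg u i * c.Dg u j)
        - (if b = u then c.Xg a i else 0) * c.Dg u j
        + c.Xg u i * (if a = u then c.Dg b j else 0) := by
    intro u
    have h1 : c.Dg u j * c.fM a b = c.fM a b * c.Dg u j + (if a = u then c.Dg b j else 0) := by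
      rw [c.fM_mul_D a b u j]; abel
    have h2 : c.Xg u i * c.fM a b = c.fM a b * c.Xg u i - (if b = u then c.Xg a i else 0) := by
      rw [c.fM_mul_X a b u i]; abel
    calc c.Xg u i * c.Dg u j * c.fM a b
        = c.Xg u i * (c.Dg u j * c.fM a b) := by rw [mul_assoc]
      _ = c.Xg u i * (c.fM a b * c.Dg u j) + c.Xg u i * (if a = u then c.Dg b j else 0) := by
          rw [h1, mul_add]
      _ = (c.Xg u i * c.fM a b) * c.Dg u j + c.Xg u i * (if a = u then c.Dg b j else 0) := by
          rw [mul_assoc]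
      _ = _ := by rw [h2, sub_mul, mul_assoc]
  have expand : c.eM i j * c.fM a b = ∑ u, (c.Xg u i * c.Dg u j) * c.fM a b := by
    rw [eM, Matrix.of_apply, Finset.sum_mul]
  have hA : (∑ u, (if b = u then c.Xg a i else 0) * c.Dg u j) = c.Xg a i * c.Dg b j := by
    simp [ite_mul]
  have hB : (∑ u, c.Xg u i * (if a = u then c.Dg b j else 0)) = c.Xg a i * c.Dg b j := by
    simp [mul_ite]
  rw [expand]
  simp only [step]
  rw [Finset.sum_add_distrib, Finset.sum_sub_distrib, ← Finset.mul_sum, hA, hB]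
  have : c.fM a b * ∑ u, c.Xg u i * c.Dg u j = c.fM a b * c.eM i j := rfl
  rw [this]
  abel

/-- Entries of `eM` commute with entries of powers of `fM`. -/
lemma eM_mul_fM_pow (s : ℕ) (i j : ι) (a b : ι') :
    c.eM i j * ((c.fM ^ s) a b) = ((c.fM ^ s) a b) * c.eM i j := by
  induction s generalizing a b with
  | zero =>
      simp only [pow_zero, Matrix.one_apply]
      by_cases h : a = b <;> simp [h]
  | succ s ih =>
      rw [pow_succ, Matrix.mul_apply, Finset.mul_sum, Finset.sum_mul]
      refine Finset.sum_congr rfl fun e _ => ?_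
      rw [← mul_assoc, ih a e, mul_assoc, c.eM_mul_fM i j e b, ← mul_assoc]

end CCR

namespace CCR

variable {R : Type*} [Ring R] [Algebra ℂ R] {ι ι' : Type*}
  [Fintype ι] [Fintype ι'] [DecidableEq ι] [DecidableEq ι'] (c : CCR R ι ι')

/-- The sandwich element `∑_{a,b} (fM^s)_{ba} · X_{ai} · D_{bj}`. -/
def sand (s : ℕ) (i j : ι) : R := ∑ a, ∑ b, ((c.fM ^ s) b a) * (c.Xg a i * c.Dg b j)

theorem core_pow (s : ℕ) (i j : ι) :
    c.sand s i j
      = (c.eM * (c.eM + (((Fintype.card ι' : ℂ) - (Fintype.card ι : ℂ)) • 1)) ^ s) i j := by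
  induction s generalizing i j with
  | zero =>
      have h0 : c.sand 0 i j = ∑ a, c.Xg a i * c.Dg a j := by
        simp [sand, Matrix.one_apply, ite_mul]
      rw [h0, pow_zero, mul_one]; rfl
  | succ s ih =>
      set κ : ℂ := (Fintype.card ι' : ℂ) - (Fintype.card ι : ℂ) with hκ
      -- Step A : peel one factor of fM
      have hA : c.sand (s+1) i j
          = (∑ a, ∑ b, ∑ e, (c.fM ^ s) b e * (c.Xg a i * (c.fM e a * c.Dg b j)))
            + (Fintype.card ι') • c.sand s i j := by
        have expand : c.sand (s+1) i j
            = ∑ a, ∑ b, ∑ e, ((c.fM ^ s) b e * c.fM e a) * (c.Xg a i * c.Dg b j) := by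
          simp only [sand, pow_succ, Matrix.mul_apply, Finset.sum_mul]
        have term : ∀ a b e, ((c.fM ^ s) b e * c.fM e a) * (c.Xg a i * c.Dg b j)
            = (c.fM ^ s) b e * (c.Xg a i * (c.fM e a * c.Dg b j))
              + (c.fM ^ s) b e * (c.Xg e i * c.Dg b j) := by
          intro a b e
          have swap : c.fM e a * c.Xg a i = c.Xg a i * c.fM e a + c.Xg e i := by
            rw [c.fM_mul_X e a a i, if_pos rfl]
          calc ((c.fM ^ s) b e * c.fM e a) * (c.Xg a i * c.Dg b j)
              = (c.fM ^ s) b e * ((c.fM e a * c.Xg a i) * c.Dg b j) := by noncomm_ring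
            _ = (c.fM ^ s) b e * ((c.Xg a i * c.fM e a + c.Xg e i) * c.Dg b j) := by rw [swap]
            _ = _ := by noncomm_ring
        rw [expand]
        simp only [term, Finset.sum_add_distrib]
        congr 1
        rw [Finset.sum_const, card_univ]
        congr 1
        rw [sand, Finset.sum_comm]
      -- Step B : regroup the quartic term
      have hB : (∑ a, ∑ b, ∑ e, (c.fM ^ s) b e * (c.Xg a i * (c.fM e a * c.Dg b j)))
          = (∑ l, c.eM i l * c.sand s l j) - (Fintype.card ι) • c.sand s i j := by
        have expand2 : ∀ (a b e : ι'), (c.fM ^ s) b e * (c.Xg a i * (c.fM e a * c.Dg b j))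
            = ∑ l, (c.fM ^ s) b e * (c.Xg a i * ((c.Xg e l * c.Dg a l) * c.Dg b j)) := by
          intro a b e
          rw [show c.fM e a = ∑ l, c.Xg e l * c.Dg a l from rfl]
          simp only [Finset.sum_mul, Finset.mul_sum]
        have termB : ∀ (a b e : ι') (l : ι),
            (c.fM ^ s) b e * (c.Xg a i * ((c.Xg e l * c.Dg a l) * c.Dg b j))
            = (c.fM ^ s) b e * ((c.Xg a i * c.Dg a l) * (c.Xg e l * c.Dg b j))
              - (if a = e then (c.fM ^ s) b e * (c.Xg a i * c.Dg b j) else 0) := by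
          intro a b e l
          by_cases h : a = e
          · subst h
            have swap2 : c.Xg a l * c.Dg a l = c.Dg a l * c.Xg a l - 1 := by
              rw [c.XD_swap a a l l, if_pos ⟨rfl, rfl⟩]
            rw [if_pos rfl, swap2]
            noncomm_ring
          · have swap2 : c.Xg e l * c.Dg a l = c.Dg a l * c.Xg e l := by
              rw [c.XD_swap e a l l, if_neg (by simp [h]), sub_zero]
            rw [if_neg h, swap2, sub_zero]
            noncomm_ring
        simp only [expand2, termB, Finset.sum_sub_distrib]
        congr 1
        · -- main quartic term
          have inner : ∀ (l : ι) (b e : ι'),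
              (∑ a, (c.fM ^ s) b e * ((c.Xg a i * c.Dg a l) * (c.Xg e l * c.Dg b j)))
              = c.eM i l * ((c.fM ^ s) b e * (c.Xg e l * c.Dg b j)) := by
            intro l b e
            have : (∑ a, (c.fM ^ s) b e * ((c.Xg a i * c.Dg a l) * (c.Xg e l * c.Dg b j)))
                = (c.fM ^ s) b e * ((∑ a, c.Xg a i * c.Dg a l) * (c.Xg e l * c.Dg b j)) := by
              simp only [Finset.mul_sum, Finset.sum_mul]
            rw [this, show (∑ a, c.Xg a i * c.Dg a l) = c.eM i l from rfl, ← mul_assoc,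
              ← c.eM_mul_fM_pow s i l b e, mul_assoc]
          calc (∑ a, ∑ b, ∑ e, ∑ l, (c.fM ^ s) b e * ((c.Xg a i * c.Dg a l) * (c.Xg e l * c.Dg b j)))
              = ∑ b, ∑ a, ∑ e, ∑ l, (c.fM ^ s) b e * ((c.Xg a i * c.Dg a l) * (c.Xg e l * c.Dg b j)) :=
                Finset.sum_comm
            _ = ∑ b, ∑ e, ∑ a, ∑ l, (c.fM ^ s) b e * ((c.Xg a i * c.Dg a l) * (c.Xg e l * c.Dg b j)) :=
                Finset.sum_congr rfl fun b _ => Finset.sum_comm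
            _ = ∑ b, ∑ e, ∑ l, ∑ a, (c.fM ^ s) b e * ((c.Xg a i * c.Dg a l) * (c.Xg e l * c.Dg b j)) :=
                Finset.sum_congr rfl fun b _ => Finset.sum_congr rfl fun e _ => Finset.sum_comm
            _ = ∑ b, ∑ l, ∑ e, ∑ a, (c.fM ^ s) b e * ((c.Xg a i * c.Dg a l) * (c.Xg e l * c.Dg b j)) :=
                Finset.sum_congr rfl fun b _ => Finset.sum_comm
            _ = ∑ l, ∑ b, ∑ e, ∑ a, (c.fM ^ s) b e * ((c.Xg a i * c.Dg a l) * (c.Xg e l * c.Dg b j)) :=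
                Finset.sum_comm
            _ = ∑ l, ∑ b, ∑ e, c.eM i l * ((c.fM ^ s) b e * (c.Xg e l * c.Dg b j)) := by
                exact Finset.sum_congr rfl fun l _ => Finset.sum_congr rfl fun b _ =>
                  Finset.sum_congr rfl fun e _ => inner l b e
            _ = ∑ l, c.eM i l * c.sand s l j := by
                refine Finset.sum_congr rfl fun l _ => ?_
                have hexp : c.eM i l * c.sand s l j
                    = ∑ a, ∑ b, c.eM i l * ((c.fM ^ s) b a * (c.Xg a l * c.Dg b j)) := by
                  rw [sand, Finset.mul_sum]
                  exact Finset.sum_congr rfl fun a _ => Finset.mul_sum _ _ _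
                rw [hexp]
                exact Finset.sum_comm
        · -- delta collapse term
          have : ∀ (a b : ι'), (∑ e, ∑ l : ι, (if a = e then (c.fM ^ s) b e * (c.Xg a i * c.Dg b j) else 0))
              = (Fintype.card ι) • ((c.fM ^ s) b a * (c.Xg a i * c.Dg b j)) := by
            intro a b
            rw [Finset.sum_comm, Finset.sum_const, card_univ]
            congr 1
            simp
          calc (∑ a, ∑ b, ∑ e, ∑ l : ι, (if a = e then (c.fM ^ s) b e * (c.Xg a i * c.Dg b j) else 0))
              = ∑ a, ∑ b, (Fintype.card ι) • ((c.fM ^ s) b a * (c.Xg a i * c.Dg b j)) := by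
                refine Finset.sum_congr rfl fun a _ => Finset.sum_congr rfl fun b _ => this a b
            _ = (Fintype.card ι) • c.sand s i j := by
                rw [sand, Finset.smul_sum]
                refine Finset.sum_congr rfl fun a _ => ?_
                rw [Finset.smul_sum]
      -- Combine
      have comm : Commute c.eM ((c.eM + κ • 1) ^ s) := by
        refine Commute.pow_right ?_ s
        exact (Commute.refl _).add_right (((Commute.one_right c.eM).smul_right κ))
      set P : Matrix ι ι R := c.eM * (c.eM + κ • 1) ^ s with hP
      have hmat : c.eM * (c.eM + κ • 1) ^ (s+1) = c.eM * P + κ • P := by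
        rw [pow_succ, hP, ← mul_assoc]
        rw [mul_add]
        congr 1
        · rw [mul_assoc, ← comm.eq, ← mul_assoc]
        · rw [mul_smul_comm, mul_one]
      rw [hA, hB, hmat]
      rw [Matrix.add_apply, Matrix.smul_apply, Matrix.mul_apply]
      have hrw : ∀ l, c.sand s l j = P l j := fun l => ih l j
      simp only [hrw]
      rw [hκ, sub_smul, Nat.cast_smul_eq_nsmul, Nat.cast_smul_eq_nsmul]
      abel

end CCR

namespace CCR

variable {R : Type*} [Ring R] [Algebra ℂ R] {ι ι' : Type*}
  [Fintype ι] [Fintype ι'] [DecidableEq ι] [DecidableEq ι'] (c : CCR R ι ι')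

theorem core_aeval (p : Polynomial ℂ) (i j : ι) :
    (∑ a, ∑ b, ((Polynomial.aeval c.fM p) b a) * (c.Xg a i * c.Dg b j))
      = (Polynomial.aeval c.eM
          (Polynomial.X * p.comp (Polynomial.X +
            Polynomial.C ((Fintype.card ι' : ℂ) - (Fintype.card ι : ℂ))))) i j := by
  set κ : ℂ := (Fintype.card ι' : ℂ) - (Fintype.card ι : ℂ) with hκ
  induction p using Polynomial.induction_on' with
  | add p q hp hq =>
      have hcomp : Polynomial.X * (p + q).comp (Polynomial.X + Polynomial.C κ)
          = Polynomial.X * p.comp (Polynomial.X + Polynomial.C κ)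
            + Polynomial.X * q.comp (Polynomial.X + Polynomial.C κ) := by
        rw [Polynomial.add_comp]; ring
      rw [hcomp, map_add, map_add, Matrix.add_apply, ← hp, ← hq, ← Finset.sum_add_distrib]
      refine Finset.sum_congr rfl fun a _ => ?_
      rw [← Finset.sum_add_distrib]
      refine Finset.sum_congr rfl fun b _ => ?_
      rw [Matrix.add_apply, add_mul]
  | monomial r a =>
      have hcomp : Polynomial.X * (Polynomial.monomial r a).comp (Polynomial.X + Polynomial.C κ)
          = Polynomial.C a * (Polynomial.X * (Polynomial.X + Polynomial.C κ) ^ r) := by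
        rw [← Polynomial.C_mul_X_pow_eq_monomial, Polynomial.mul_comp, Polynomial.C_comp,
          Polynomial.X_pow_comp]
        ring
      have hL : ∀ b a' : ι', (Polynomial.aeval c.fM (Polynomial.monomial r a)) b a'
          = a • ((c.fM ^ r) b a') := by
        intro b a'
        rw [Polynomial.aeval_monomial, ← Algebra.smul_def, Matrix.smul_apply]
      have hR : Polynomial.aeval c.eM
            (Polynomial.C a * (Polynomial.X * (Polynomial.X + Polynomial.C κ) ^ r))
          = a • (c.eM * (c.eM + κ • 1) ^ r) := by
        rw [map_mul, Polynomial.aeval_C, ← Algebra.smul_def, map_mul, Polynomial.aeval_X,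
          map_pow, map_add, Polynomial.aeval_X, Polynomial.aeval_C,
          Algebra.algebraMap_eq_smul_one]
      rw [hcomp, hR, Matrix.smul_apply, ← core_pow c r i j, sand, Finset.smul_sum]
      refine Finset.sum_congr rfl fun a' _ => ?_
      rw [Finset.smul_sum]
      refine Finset.sum_congr rfl fun b _ => ?_
      rw [hL, smul_mul_assoc]

end CCR

set_option maxHeartbeats 1000000
set_option synthInstance.maxHeartbeats 400000

section Concrete
variable (n k : ℕ)

lemma xop_comm (a b : Fin k) (i : Fin n) (j : Fin n) :
    Xop n k a i * Xop n k b j = Xop n k b j * Xop n k a i := by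
  apply LinearMap.ext; intro f
  simp only [Xop, Module.End.mul_apply, LinearMap.mulLeft_apply]
  ring

lemma pderiv_swap {σ : Type*} [DecidableEq σ] (p q : σ) (f : MvPolynomial σ ℂ) :
    MvPolynomial.pderiv p (MvPolynomial.pderiv q f)
      = MvPolynomial.pderiv q (MvPolynomial.pderiv p f) := by
  have h : ⁅(MvPolynomial.pderiv p : Derivation ℂ (MvPolynomial σ ℂ) (MvPolynomial σ ℂ)),
      (MvPolynomial.pderiv q : Derivation ℂ (MvPolynomial σ ℂ) (MvPolynomial σ ℂ))⁆ = 0 := by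
    apply MvPolynomial.derivation_ext
    intro u
    rw [Derivation.commutator_apply, Derivation.zero_apply]
    have z1 : ∀ v : σ, MvPolynomial.pderiv p (MvPolynomial.pderiv v (MvPolynomial.X u :
        MvPolynomial σ ℂ)) = MvPolynomial.pderiv q (MvPolynomial.pderiv v (MvPolynomial.X u :
        MvPolynomial σ ℂ)) ∨ True := fun _ => Or.inr trivial
    by_cases hq : u = q
    · subst hq
      rw [MvPolynomial.pderiv_X_self]
      by_cases hp : (u : σ) = p
      · subst hp; rw [MvPolynomial.pderiv_X_self]; simp
      · rw [MvPolynomial.pderiv_X_of_ne hp]; simp [MvPolynomial.pderiv_one]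
    · rw [MvPolynomial.pderiv_X_of_ne hq, map_zero]
      by_cases hp : u = p
      · subst hp; rw [MvPolynomial.pderiv_X_self]; simp [MvPolynomial.pderiv_one]
      · rw [MvPolynomial.pderiv_X_of_ne hp, map_zero]; simp
  have := congrArg (fun D : Derivation ℂ (MvPolynomial σ ℂ) (MvPolynomial σ ℂ) => D f) h
  simp only [Derivation.commutator_apply, Derivation.zero_apply, sub_eq_zero] at this
  exact this

lemma dop_comm (a b : Fin k) (i : Fin n) (j : Fin n) :
    Dop n k a i * Dop n k b j = Dop n k b j * Dop n k a i := by
  apply LinearMap.ext; intro f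
  simp only [Dop, Module.End.mul_apply, Derivation.coeFn_coe]
  exact pderiv_swap _ _ f

lemma dop_mul_xop (a b : Fin k) (i : Fin n) (j : Fin n) :
    Dop n k a i * Xop n k b j
      = Xop n k b j * Dop n k a i
        + (if a = b ∧ i = j then (1 : Module.End ℂ (Pring n k)) else 0) := by
  apply LinearMap.ext; intro f
  by_cases h : a = b ∧ i = j
  · obtain ⟨h1, h2⟩ := h
    subst h1; subst h2
    simp only [Dop, Xop, Module.End.mul_apply, LinearMap.add_apply, LinearMap.mulLeft_apply,
      Derivation.coeFn_coe]
    rw [MvPolynomial.pderiv_mul, MvPolynomial.pderiv_X_self]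
    simp only [and_self, if_true, Module.End.one_apply]
    ring
  · have hne : ((b, j) : Fin k × Fin n) ≠ (a, i) := by
      intro hc
      obtain ⟨h1, h2⟩ := Prod.mk.injEq b j a i ▸ hc
      exact h ⟨h1.symm, h2.symm⟩
    simp only [Dop, Xop, Module.End.mul_apply, LinearMap.add_apply, LinearMap.mulLeft_apply,
      Derivation.coeFn_coe, if_neg h, LinearMap.zero_apply]
    rw [MvPolynomial.pderiv_mul, MvPolynomial.pderiv_X_of_ne hne]
    ring

/-- `X_{ai}` as an element of the Weyl algebra. -/
def xW (a : Fin k) (i : Fin n) : Weyl n k :=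
  ⟨Xop n k a i, Algebra.subset_adjoin (Or.inl ⟨(a, i), rfl⟩)⟩

/-- `D_{ai}` as an element of the Weyl algebra. -/
def dW (a : Fin k) (i : Fin n) : Weyl n k :=
  ⟨Dop n k a i, Algebra.subset_adjoin (Or.inr ⟨(a, i), rfl⟩)⟩

lemma dW_mul_xW (a b : Fin k) (i : Fin n) (j : Fin n) :
    dW n k a i * xW n k b j
      = xW n k b j * dW n k a i + (if a = b ∧ i = j then 1 else 0) := by
  apply Subtype.ext
  rw [show ((dW n k a i * xW n k b j : Weyl n k) : Module.End ℂ (Pring n k))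
      = Dop n k a i * Xop n k b j from rfl]
  rw [dop_mul_xop]
  congr 1
  rw [apply_ite (fun z : Weyl n k => (z : Module.End ℂ (Pring n k)))]
  simp

/-- The CCR structure on the Weyl algebra realizing `gl_n` as `eM` and `gl_k` as `fM`. -/
def ccrW : CCR (Weyl n k) (Fin n) (Fin k) where
  Xg := fun a i => xW n k a i
  Dg := fun a i => dW n k a i
  hXX := fun a i b j => Subtype.ext (xop_comm n k a b i j)
  hDD := fun a i b j => Subtype.ext (dop_comm n k a b i j)
  hDX := fun a i b j => dW_mul_xW n k a b i j

/-- The transposed CCR structure, exchanging the roles of `gl_n` and `gl_k`. -/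
def ccrW' : CCR (Weyl n k) (Fin k) (Fin n) where
  Xg := fun i a => xW n k a i
  Dg := fun i a => dW n k a i
  hXX := fun i a j b => Subtype.ext (xop_comm n k a b i j)
  hDD := fun i a j b => Subtype.ext (dop_comm n k a b i j)
  hDX := fun i a j b => by
    rw [dW_mul_xW n k a b i j]
    congr 1
    exact if_congr and_comm rfl rfl

lemma ccrW_eM (i j : Fin n) :
    (ccrW n k).eM i j = ⟨Eop n k i j, Eop_mem n k i j⟩ := by
  apply Subtype.ext
  show ((∑ a, xW n k a i * dW n k a j : Weyl n k) : Module.End ℂ (Pring n k)) = Eop n k i j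
  rw [AddSubmonoidClass.coe_finset_sum]
  rfl

lemma ccrW_fM (a b : Fin k) :
    (ccrW n k).fM a b = ⟨E'op n k a b, E'op_mem n k a b⟩ := by
  apply Subtype.ext
  show ((∑ i, xW n k a i * dW n k b i : Weyl n k) : Module.End ℂ (Pring n k)) = E'op n k a b
  rw [AddSubmonoidClass.coe_finset_sum]
  rfl

lemma ccrW'_eM (a b : Fin k) :
    (ccrW' n k).eM a b = ⟨E'op n k a b, E'op_mem n k a b⟩ := by
  apply Subtype.ext
  show ((∑ i, xW n k a i * dW n k b i : Weyl n k) : Module.End ℂ (Pring n k)) = E'op n k a b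
  rw [AddSubmonoidClass.coe_finset_sum]
  rfl

lemma ccrW'_fM (i j : Fin n) :
    (ccrW' n k).fM i j = ⟨Eop n k i j, Eop_mem n k i j⟩ := by
  apply Subtype.ext
  show ((∑ a, xW n k a i * dW n k a j : Weyl n k) : Module.End ℂ (Pring n k)) = Eop n k i j
  rw [AddSubmonoidClass.coe_finset_sum]
  rfl

end Concrete

section Transfer

lemma isMinPoly_dvd {W : Type} [AddCommGroup W] [Module ℂ W] {ι : Type} [Fintype ι]
    [DecidableEq ι] {M : Matrix ι ι (Module.End ℂ W)} {q : Polynomial ℂ}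
    (h : IsMinPoly M q) {p : Polynomial ℂ} (hp : Polynomial.aeval M p = 0) : q ∣ p := by
  obtain ⟨hm, _h0, hmin⟩ := h
  rw [← Polynomial.modByMonic_eq_zero_iff_dvd hm]
  by_contra hne
  have hr0 : Polynomial.aeval M (p %ₘ q) = 0 := by
    rw [Polynomial.modByMonic_eq_sub_mul_div _ q, map_sub, map_mul, _h0, zero_mul, hp, sub_zero]
  have hmonic := Polynomial.monic_mul_leadingCoeff_inv hne
  have haev : Polynomial.aeval M ((p %ₘ q) * Polynomial.C (p %ₘ q).leadingCoeff⁻¹) = 0 := by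
    rw [map_mul, hr0, zero_mul]
  have hd := hmin _ hmonic haev
  rw [Polynomial.degree_mul_leadingCoeff_inv _ hne] at hd
  exact absurd (lt_of_le_of_lt hd (Polynomial.degree_modByMonic_lt p hm)) (lt_irrefl _)

variable (V V' : Type) [AddCommGroup V] [Module ℂ V] [AddCommGroup V'] [Module ℂ V']

/-- `rTensor` as an algebra homomorphism `End V →ₐ End (V ⊗ V')`. -/
def rTensorAlg : Module.End ℂ V →ₐ[ℂ] Module.End ℂ (TensorProduct ℂ V V') :=
  AlgHom.ofLinearMap (LinearMap.rTensorHom V') (LinearMap.rTensor_id V' V)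
    (fun f g => LinearMap.rTensor_comp V' f g)

/-- `lTensor` as an algebra homomorphism `End V' →ₐ End (V ⊗ V')`. -/
def lTensorAlg : Module.End ℂ V' →ₐ[ℂ] Module.End ℂ (TensorProduct ℂ V V') :=
  AlgHom.ofLinearMap (LinearMap.lTensorHom V) (LinearMap.lTensor_id V V')
    (fun f g => LinearMap.lTensor_comp V f g)

@[simp] lemma rTensorAlg_apply (f : Module.End ℂ V) :
    rTensorAlg V V' f = LinearMap.rTensor V' f := rfl

@[simp] lemma lTensorAlg_apply (f : Module.End ℂ V') :
    lTensorAlg V V' f = LinearMap.lTensor V f := rfl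

/-- A functional hitting `1` on a given nonzero vector. -/
lemma exists_dual (v : V) (hv : v ≠ 0) : ∃ g : V →ₗ[ℂ] ℂ, g v = 1 := by
  have hker : LinearMap.ker (LinearMap.toSpanSingleton ℂ V v) = ⊥ := by
    rw [LinearMap.ker_eq_bot']
    intro c hc
    rcases (show c = 0 ∨ v = 0 by
      simpa [LinearMap.toSpanSingleton_apply, smul_eq_zero] using hc) with h | h
    · exact h
    · exact absurd h hv
  obtain ⟨g, hg⟩ := LinearMap.exists_leftInverse_of_injective _ hker
  refine ⟨g, ?_⟩
  have := congrArg (fun h : ℂ →ₗ[ℂ] ℂ => h 1) hg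
  simpa [LinearMap.toSpanSingleton_apply] using this

lemma rTensor_vanish [Nontrivial V'] (f : Module.End ℂ V)
    (h : ∀ z : TensorProduct ℂ V V', LinearMap.rTensor V' f z = 0) : f = 0 := by
  obtain ⟨v', hv'⟩ := exists_ne (0 : V')
  obtain ⟨g, hg⟩ := exists_dual V' v' hv'
  apply LinearMap.ext; intro v
  have h0 : (f v) ⊗ₜ[ℂ] v' = (0 : TensorProduct ℂ V V') := by
    simpa [LinearMap.rTensor_tmul] using h (v ⊗ₜ v')
  have h1 := congrArg (fun z => (TensorProduct.rid ℂ V) ((LinearMap.lTensor V g) z)) h0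
  simpa [LinearMap.lTensor_tmul, TensorProduct.rid_tmul, hg] using h1

lemma lTensor_vanish [Nontrivial V] (f : Module.End ℂ V')
    (h : ∀ z : TensorProduct ℂ V V', LinearMap.lTensor V f z = 0) : f = 0 := by
  obtain ⟨v, hv⟩ := exists_ne (0 : V)
  obtain ⟨g, hg⟩ := exists_dual V v hv
  apply LinearMap.ext; intro v'
  have h0 : v ⊗ₜ[ℂ] (f v') = (0 : TensorProduct ℂ V V') := by
    simpa [LinearMap.lTensor_tmul] using h (v ⊗ₜ v')
  have h1 := congrArg (fun z => (TensorProduct.lid ℂ V') ((LinearMap.rTensor V' g) z)) h0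
  simpa [LinearMap.rTensor_tmul, TensorProduct.lid_tmul, hg] using h1

variable {A T : Type} [AddCommGroup A] [Module ℂ A] [AddCommGroup T] [Module ℂ T]
  {W : Type} [AddCommGroup W] [Module ℂ W]

/-- Pairs `(g, h)` with `π ∘ g = Ψ h ∘ π` form a subalgebra of `End A × End W`. -/
def interSub (π : A →ₗ[ℂ] T) (Ψ : Module.End ℂ W →ₐ[ℂ] Module.End ℂ T) :
    Subalgebra ℂ (Module.End ℂ A × Module.End ℂ W) where
  carrier := {z | ∀ x : A, π (z.1 x) = Ψ z.2 (π x)}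
  mul_mem' := by
    intro z w hz hw x
    show π (z.1 (w.1 x)) = Ψ (z.2 * w.2) (π x)
    rw [map_mul, Module.End.mul_apply, hz (w.1 x), hw x]
  one_mem' := by
    intro x
    show π ((1 : Module.End ℂ A) x) = Ψ 1 (π x)
    rw [map_one, Module.End.one_apply, Module.End.one_apply]
  add_mem' := by
    intro z w hz hw x
    show π (z.1 x + w.1 x) = Ψ (z.2 + w.2) (π x)
    rw [map_add, map_add, LinearMap.add_apply, hz x, hw x]
  zero_mem' := by
    intro x
    show π ((0 : Module.End ℂ A) x) = Ψ 0 (π x)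
    rw [map_zero, LinearMap.zero_apply, LinearMap.zero_apply, map_zero]
  algebraMap_mem' := by
    intro c x
    show π ((algebraMap ℂ (Module.End ℂ A) c) x) = Ψ (algebraMap ℂ (Module.End ℂ W) c) (π x)
    rw [AlgHom.commutes, Module.algebraMap_end_apply, Module.algebraMap_end_apply, map_smul]

lemma interSub_aeval (π : A →ₗ[ℂ] T) (Ψ : Module.End ℂ W →ₐ[ℂ] Module.End ℂ T)
    {ι : Type} [Fintype ι] [DecidableEq ι]
    (Mm : Matrix ι ι (Module.End ℂ A)) (Nm : Matrix ι ι (Module.End ℂ W))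
    (h : ∀ u v, (Mm u v, Nm u v) ∈ interSub π Ψ) (p : Polynomial ℂ) (u v : ι) (x : A) :
    π ((Polynomial.aeval Mm p) u v x) = Ψ ((Polynomial.aeval Nm p) u v) (π x) := by
  let B := interSub π Ψ
  let MB : Matrix ι ι B := fun u v => ⟨(Mm u v, Nm u v), h u v⟩
  let p1 : B →ₐ[ℂ] Module.End ℂ A := (AlgHom.fst ℂ _ _).comp B.val
  let p2 : B →ₐ[ℂ] Module.End ℂ W := (AlgHom.snd ℂ _ _).comp B.val
  have h1 : (Polynomial.aeval Mm p) u v = (((Polynomial.aeval MB p) u v : B) :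
      Module.End ℂ A × Module.End ℂ W).1 := by
    have hMm : p1.mapMatrix MB = Mm := by ext u' v'; rfl
    calc (Polynomial.aeval Mm p) u v
        = (Polynomial.aeval (p1.mapMatrix MB) p) u v := by rw [hMm]
      _ = (p1.mapMatrix ((Polynomial.aeval MB p))) u v := by
          rw [Polynomial.aeval_algHom_apply]
      _ = _ := rfl
  have h2 : (Polynomial.aeval Nm p) u v = (((Polynomial.aeval MB p) u v : B) :
      Module.End ℂ A × Module.End ℂ W).2 := by
    have hNm : p2.mapMatrix MB = Nm := by ext u' v'; rfl
    calc (Polynomial.aeval Nm p) u v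
        = (Polynomial.aeval (p2.mapMatrix MB) p) u v := by rw [hNm]
      _ = (p2.mapMatrix ((Polynomial.aeval MB p))) u v := by
          rw [Polynomial.aeval_algHom_apply]
      _ = _ := rfl
  rw [h1, h2]
  exact ((Polynomial.aeval MB p) u v).2 x

lemma algHom_matrix_aeval {R₁ R₂ : Type*} [Ring R₁] [Ring R₂] [Algebra ℂ R₁] [Algebra ℂ R₂]
    {ι : Type} [Fintype ι] [DecidableEq ι] (f : R₁ →ₐ[ℂ] R₂) (M : Matrix ι ι R₁)
    (p : Polynomial ℂ) (u v : ι) :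
    (Polynomial.aeval (f.mapMatrix M) p) u v = f ((Polynomial.aeval M p) u v) := by
  rw [Polynomial.aeval_algHom_apply, AlgHom.mapMatrix_apply, Matrix.map_apply]

end Transfer


/-- Let `A` be a module over the Weyl algebra `W` (via `Φ`), `A₀ ⊆ A` a
subspace stable under all operators `E_{ij}` and `E'_{ab}`, `V` a nonzero `gl_n`-module with
minimal polynomial `q` and `V'` a nonzero `gl_k`-module with minimal polynomial `q'`, and
suppose `φ : A/A₀ ≅ V ⊗ V'` intertwines the action of each `E_{ij}` with `E_{ij} ⊗ 1` and
the action of each `E'_{ab}` with `1 ⊗ E'_{ab}`.  Then `q(u) ∣ u·q'(u + k − n)` and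
`q'(u) ∣ u·q(u − k + n)`. -/
theorem stmt_11 (n k : ℕ)
    (A : Type) [AddCommGroup A] [Module ℂ A]
    (Φ : Weyl n k →ₐ[ℂ] Module.End ℂ A)
    (A₀ : Submodule ℂ A)
    (hA₀E : ∀ (i j : Fin n), ∀ m ∈ A₀, Φ ⟨Eop n k i j, Eop_mem n k i j⟩ m ∈ A₀)
    (hA₀E' : ∀ (a b : Fin k), ∀ m ∈ A₀, Φ ⟨E'op n k a b, E'op_mem n k a b⟩ m ∈ A₀)
    (V : Type) [AddCommGroup V] [Module ℂ V] [Nontrivial V]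
    (V' : Type) [AddCommGroup V'] [Module ℂ V'] [Nontrivial V']
    (ρ : glN n →ₗ⁅ℂ⁆ Module.End ℂ V) (ρ' : glN k →ₗ⁅ℂ⁆ Module.End ℂ V')
    (q q' : Polynomial ℂ)
    (hq : IsMinPoly (FV n ρ) q) (hq' : IsMinPoly (FV k ρ') q')
    (φ : (A ⧸ A₀) ≃ₗ[ℂ] TensorProduct ℂ V V')
    (hφE : ∀ (i j : Fin n) (x : A),
      φ (Submodule.Quotient.mk (Φ ⟨Eop n k i j, Eop_mem n k i j⟩ x)) =
        LinearMap.rTensor V' (ρ (Matrix.single i j 1))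
          (φ (Submodule.Quotient.mk x)))
    (hφE' : ∀ (a b : Fin k) (x : A),
      φ (Submodule.Quotient.mk (Φ ⟨E'op n k a b, E'op_mem n k a b⟩ x)) =
        LinearMap.lTensor V (ρ' (Matrix.single a b 1))
          (φ (Submodule.Quotient.mk x))) :
    q ∣ Polynomial.X * q'.comp (Polynomial.X + Polynomial.C ((k : ℂ) - (n : ℂ))) ∧
    q' ∣ Polynomial.X * q.comp (Polynomial.X - Polynomial.C ((k : ℂ) - (n : ℂ))) := by
  classical
  set κ : ℂ := (k : ℂ) - (n : ℂ) with hκdef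
  set R₁ : Polynomial ℂ := Polynomial.X * q'.comp (Polynomial.X + Polynomial.C κ) with hR₁
  set R₂ : Polynomial ℂ :=
    Polynomial.X * q.comp (Polynomial.X + Polynomial.C ((n : ℂ) - (k : ℂ))) with hR₂
  let π : A →ₗ[ℂ] TensorProduct ℂ V V' := φ.toLinearMap ∘ₗ A₀.mkQ
  let Ψr := rTensorAlg V V'
  let Ψl := lTensorAlg V V'
  let ME : Matrix (Fin n) (Fin n) (Module.End ℂ A) := Φ.mapMatrix (ccrW n k).eM
  let MF : Matrix (Fin k) (Fin k) (Module.End ℂ A) := Φ.mapMatrix (ccrW n k).fM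
  have hπ : ∀ y : A, π y = φ (Submodule.Quotient.mk y) := fun y => rfl
  -- intertwining memberships
  have hE : ∀ i j, (ME i j, FV n ρ i j) ∈ interSub π Ψr := by
    intro i j
    show ∀ x : A, π (Φ ((ccrW n k).eM i j) x) = Ψr (FV n ρ i j) (π x)
    intro x
    rw [ccrW_eM n k i j]
    exact hφE i j x
  have hF : ∀ a b, (MF a b, FV k ρ' a b) ∈ interSub π Ψl := by
    intro a b
    show ∀ x : A, π (Φ ((ccrW n k).fM a b) x) = Ψl (FV k ρ' a b) (π x)
    intro x
    rw [ccrW_fM n k a b]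
    exact hφE' a b x
  -- membership of annihilating-polynomial entries
  have memq' : ∀ (a b : Fin k) (y : A),
      Φ ((Polynomial.aeval (ccrW n k).fM q') b a) y ∈ A₀ := by
    intro a b y
    have h1 := interSub_aeval π Ψl MF (FV k ρ') hF q' b a y
    rw [hq'.2.1] at h1
    rw [algHom_matrix_aeval Φ (ccrW n k).fM q' b a] at h1
    simp only [Matrix.zero_apply, map_zero, LinearMap.zero_apply] at h1
    rw [← Submodule.Quotient.mk_eq_zero A₀]
    apply φ.injective
    rw [map_zero]
    exact h1
  have memq : ∀ (i j : Fin n) (y : A),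
      Φ ((Polynomial.aeval (ccrW n k).eM q) j i) y ∈ A₀ := by
    intro i j y
    have h1 := interSub_aeval π Ψr ME (FV n ρ) hE q j i y
    rw [hq.2.1] at h1
    rw [algHom_matrix_aeval Φ (ccrW n k).eM q j i] at h1
    simp only [Matrix.zero_apply, map_zero, LinearMap.zero_apply] at h1
    rw [← Submodule.Quotient.mk_eq_zero A₀]
    apply φ.injective
    rw [map_zero]
    exact h1
  -- part 1
  have key1 : ∀ (i j : Fin n) (x : A), (Polynomial.aeval ME R₁) i j x ∈ A₀ := by
    intro i j x
    have hcore := (ccrW n k).core_aeval q' i j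
    simp only [Fintype.card_fin] at hcore
    rw [algHom_matrix_aeval Φ (ccrW n k).eM R₁ i j, hR₁, hκdef, ← hcore]
    rw [map_sum]
    rw [LinearMap.coe_sum, Finset.sum_apply]
    refine Submodule.sum_mem A₀ fun a _ => ?_
    rw [map_sum, LinearMap.coe_sum, Finset.sum_apply]
    refine Submodule.sum_mem A₀ fun b _ => ?_
    rw [map_mul, Module.End.mul_apply]
    exact memq' a b _
  have hzero1 : Polynomial.aeval (FV n ρ) R₁ = 0 := by
    refine Matrix.ext fun i j => ?_
    rw [Matrix.zero_apply]
    apply rTensor_vanish V V'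
    intro z
    obtain ⟨u, hu⟩ := φ.surjective z
    obtain ⟨x, hx⟩ := Submodule.Quotient.mk_surjective A₀ u
    have h1 := interSub_aeval π Ψr ME (FV n ρ) hE R₁ i j x
    have h2 : π ((Polynomial.aeval ME R₁) i j x) = 0 := by
      rw [hπ, (Submodule.Quotient.mk_eq_zero A₀).mpr (key1 i j x), map_zero]
    rw [h2] at h1
    have hπx : π x = z := by rw [hπ, hx, hu]
    rw [hπx] at h1
    exact h1.symm
  have d1 : q ∣ R₁ := isMinPoly_dvd hq hzero1
  -- part 2
  have hswap1 : (ccrW' n k).eM = (ccrW n k).fM := by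
    funext a b
    rw [ccrW'_eM n k a b, ccrW_fM n k a b]
  have hswap2 : (ccrW' n k).fM = (ccrW n k).eM := by
    funext i j
    rw [ccrW'_fM n k i j, ccrW_eM n k i j]
  have key2 : ∀ (a b : Fin k) (x : A), (Polynomial.aeval MF R₂) a b x ∈ A₀ := by
    intro a b x
    have hcore := (ccrW' n k).core_aeval q a b
    simp only [Fintype.card_fin] at hcore
    rw [hswap1, hswap2] at hcore
    rw [algHom_matrix_aeval Φ (ccrW n k).fM R₂ a b, hR₂, ← hcore]
    rw [map_sum]
    rw [LinearMap.coe_sum, Finset.sum_apply]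
    refine Submodule.sum_mem A₀ fun i _ => ?_
    rw [map_sum, LinearMap.coe_sum, Finset.sum_apply]
    refine Submodule.sum_mem A₀ fun j _ => ?_
    rw [map_mul, Module.End.mul_apply]
    exact memq i j _
  have hzero2 : Polynomial.aeval (FV k ρ') R₂ = 0 := by
    refine Matrix.ext fun a b => ?_
    rw [Matrix.zero_apply]
    apply lTensor_vanish V V'
    intro z
    obtain ⟨u, hu⟩ := φ.surjective z
    obtain ⟨x, hx⟩ := Submodule.Quotient.mk_surjective A₀ u
    have h1 := interSub_aeval π Ψl MF (FV k ρ') hF R₂ a b x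
    have h2 : π ((Polynomial.aeval MF R₂) a b x) = 0 := by
      rw [hπ, (Submodule.Quotient.mk_eq_zero A₀).mpr (key2 a b x), map_zero]
    rw [h2] at h1
    have hπx : π x = z := by rw [hπ, hx, hu]
    rw [hπx] at h1
    exact h1.symm
  have d2 : q' ∣ R₂ := isMinPoly_dvd hq' hzero2
  have harg : (Polynomial.X + Polynomial.C ((n : ℂ) - (k : ℂ)) : Polynomial ℂ)
      = Polynomial.X - Polynomial.C κ := by
    rw [hκdef, Polynomial.C_sub, Polynomial.C_sub]
    ring
  have hR₂eq : R₂ = Polynomial.X * q.comp (Polynomial.X - Polynomial.C κ) := by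
    rw [hR₂, harg]
  rw [hR₂eq] at d2
  exact ⟨d1, d2⟩
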